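/- Let R be a strongly ℤ-graded ring with grading 𝒜. Let Y⁻ be a projective R_{≤0}-module, Y⁰ a projective R-module, and Y⁺ a projective R_{≥0}-module; let υ⁻ : Y⁻ → Y⁰ be an R_{≤0}-linear map and υ⁺ : Y⁺ → Y⁰ an R_{≥0}-linear map (where Y⁰ is an R_{≤0}- and R_{≥0}-module by restriction of scalars). If the 𝒜 0-linear map Y⁻ × Y⁺ → Y⁰, (a, b) ↦ υ⁻(a) − υ⁺(b), is surjective, then its kernel is a projective 𝒜 0-module. -/

import Mathlib

universe u

/-- A ℤ-graded ring is *strongly graded* if `𝒜 i * 𝒜 j = 𝒜 (i + j)` for all `i j`. -/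
def IsStronglyGraded {R : Type*} [Ring R] (𝒜 : ℤ → Submodule ℤ R) : Prop :=
  ∀ i j : ℤ, 𝒜 i * 𝒜 j = 𝒜 (i + j)

variable {R : Type*} [Ring R] (𝒜 : ℤ → Submodule ℤ R) [GradedRing 𝒜]

/-- `R_{≤k}`, the sum of the homogeneous components of degree at most `k`. -/
def Rle (k : ℤ) : Submodule ℤ R := ⨆ n ≤ k, 𝒜 n

/-- `R_{≥k}`, the sum of the homogeneous components of degree at least `k`. -/
def Rge (k : ℤ) : Submodule ℤ R := ⨆ n ≥ k, 𝒜 n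

theorem Rle_mul_Rle (a b : ℤ) : Rle 𝒜 a * Rle 𝒜 b ≤ Rle 𝒜 (a + b) := by
  rw [Rle, Rle, Submodule.iSup_mul]
  refine iSup_le fun n => ?_
  rw [Submodule.iSup_mul]
  refine iSup_le fun hn => ?_
  rw [Submodule.mul_iSup]
  refine iSup_le fun m => ?_
  rw [Submodule.mul_iSup]
  refine iSup_le fun hm => ?_
  refine le_trans (Submodule.mul_le.2 fun x hx y hy => SetLike.mul_mem_graded hx hy) ?_
  exact le_iSup₂_of_le (n + m) (add_le_add hn hm) le_rfl

theorem Rge_mul_Rge (a b : ℤ) : Rge 𝒜 a * Rge 𝒜 b ≤ Rge 𝒜 (a + b) := by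
  rw [Rge, Rge, Submodule.iSup_mul]
  refine iSup_le fun n => ?_
  rw [Submodule.iSup_mul]
  refine iSup_le fun hn => ?_
  rw [Submodule.mul_iSup]
  refine iSup_le fun m => ?_
  rw [Submodule.mul_iSup]
  refine iSup_le fun hm => ?_
  refine le_trans (Submodule.mul_le.2 fun x hx y hy => SetLike.mul_mem_graded hx hy) ?_
  exact le_iSup₂_of_le (n + m) (add_le_add hn hm) le_rfl

theorem grade_mem_Rle {k : ℤ} {x : R} (hx : x ∈ 𝒜 k) : x ∈ Rle 𝒜 k :=
  Submodule.mem_iSup_of_mem k (Submodule.mem_iSup_of_mem le_rfl hx)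

theorem grade_mem_Rge {k : ℤ} {x : R} (hx : x ∈ 𝒜 k) : x ∈ Rge 𝒜 k :=
  Submodule.mem_iSup_of_mem k (Submodule.mem_iSup_of_mem le_rfl hx)

/-- The subring `R_{≤0}` of `R`. -/
def RleSubring : Subring R where
  carrier := Rle 𝒜 0
  zero_mem' := zero_mem _
  add_mem' := fun h1 h2 => add_mem h1 h2
  neg_mem' := fun h => neg_mem h
  one_mem' := grade_mem_Rle 𝒜 (SetLike.one_mem_graded 𝒜)
  mul_mem' := fun h1 h2 => by
    simpa using Rle_mul_Rle 𝒜 0 0 (Submodule.mul_mem_mul h1 h2)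

/-- The subring `R_{≥0}` of `R`. -/
def RgeSubring : Subring R where
  carrier := Rge 𝒜 0
  zero_mem' := zero_mem _
  add_mem' := fun h1 h2 => add_mem h1 h2
  neg_mem' := fun h => neg_mem h
  one_mem' := grade_mem_Rge 𝒜 (SetLike.one_mem_graded 𝒜)
  mul_mem' := fun h1 h2 => by
    simpa using Rge_mul_Rge 𝒜 0 0 (Submodule.mul_mem_mul h1 h2)

/-- The inclusion of the subring `𝒜 0` into `R`. -/
def incl0 : (𝒜 0) →+* R where
  toFun a := (a : R)
  map_one' := rfl
  map_mul' _ _ := rfl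
  map_zero' := rfl
  map_add' _ _ := rfl

/-- The inclusion of the subring `𝒜 0` into the subring `R_{≤0}`. -/
def incl0le : (𝒜 0) →+* RleSubring 𝒜 where
  toFun a := ⟨(a : R), grade_mem_Rle 𝒜 a.2⟩
  map_one' := rfl
  map_mul' _ _ := rfl
  map_zero' := rfl
  map_add' _ _ := rfl

/-- The inclusion of the subring `𝒜 0` into the subring `R_{≥0}`. -/
def incl0ge : (𝒜 0) →+* RgeSubring 𝒜 where
  toFun a := ⟨(a : R), grade_mem_Rge 𝒜 a.2⟩
  map_one' := rfl
  map_mul' _ _ := rfl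
  map_zero' := rfl
  map_add' _ _ := rfl

/-- Restriction of scalars along `𝒜 0 → R`. -/
instance restrictFromR (M : Type u) [AddCommMonoid M] [Module R M] :
    Module (𝒜 0) M :=
  Module.compHom M (incl0 𝒜)

/-- Restriction of scalars along `𝒜 0 → R_{≤0}`. -/
instance restrictFromRle (M : Type u) [AddCommMonoid M] [Module (RleSubring 𝒜) M] :
    Module (𝒜 0) M :=
  Module.compHom M (incl0le 𝒜)

/-- Restriction of scalars along `𝒜 0 → R_{≥0}`. -/
instance restrictFromRge (M : Type u) [AddCommMonoid M] [Module (RgeSubring 𝒜) M] :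
    Module (𝒜 0) M :=
  Module.compHom M (incl0ge 𝒜)

/-- Restriction of scalars along `R_{≤0} → R`. -/
instance moduleRleOfR (M : Type u) [AddCommMonoid M] [Module R M] :
    Module (RleSubring 𝒜) M :=
  Module.compHom M (RleSubring 𝒜).subtype

/-- Restriction of scalars along `R_{≥0} → R`. -/
instance moduleRgeOfR (M : Type u) [AddCommMonoid M] [Module R M] :
    Module (RgeSubring 𝒜) M :=
  Module.compHom M (RgeSubring 𝒜).subtype


set_option synthInstance.maxHeartbeats 1000000
set_option maxHeartbeats 1000000

section AuxiliaryLemmas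

open DirectSum

theorem list_sum_map_mul_left' {α : Type*} {S : Type*} [NonUnitalNonAssocSemiring S]
    (L : List α) (f : α → S) (r : S) :
    (L.map fun a => r * f a).sum = r * (L.map f).sum := by
  induction L with
  | nil => simp
  | cons a L ih => simp [ih, mul_add]

theorem list_smul_sum' {α A M : Type*} [Semiring A] [AddCommMonoid M] [Module A M]
    (L : List α) (f : α → M) (c : A) :
    c • (L.map f).sum = (L.map fun a => c • f a).sum := by
  induction L with
  | nil => simp
  | cons a L ih => simp [smul_add, ih]

theorem list_sum_addHom_apply {α M N : Type*} [AddCommMonoid M] [AddCommMonoid N]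
    (L : List α) (f : α → M →+ N) (a : M) :
    ((L.map f).sum) a = (L.map fun x => f x a).sum := by
  induction L with
  | nil => rfl
  | cons x L ih => simp [ih]

theorem exists_dualbasis_list (h : IsStronglyGraded 𝒜) (n : ℤ) :
    ∃ l : List (R × R), (∀ p ∈ l, p.1 ∈ 𝒜 (-n) ∧ p.2 ∈ 𝒜 n) ∧
      (l.map fun p => p.1 * p.2).sum = 1 := by
  have key : ∀ r ∈ 𝒜 (-n) * 𝒜 n, ∃ l : List (R × R),
      (∀ p ∈ l, p.1 ∈ 𝒜 (-n) ∧ p.2 ∈ 𝒜 n) ∧ (l.map fun p => p.1 * p.2).sum = r := by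
    intro r hr
    refine Submodule.mul_induction_on hr ?_ ?_
    · exact fun m hm x hx => ⟨[(m, x)], by simp [hm, hx], by simp⟩
    · rintro a b ⟨l₁, h₁, e₁⟩ ⟨l₂, h₂, e₂⟩
      refine ⟨l₁ ++ l₂, ?_, by simp [e₁, e₂]⟩
      intro p hp
      rcases List.mem_append.1 hp with hp | hp
      exacts [h₁ p hp, h₂ p hp]
  apply key
  rw [h, neg_add_cancel]
  exact SetLike.one_mem_graded 𝒜

/-- The key projectivity lemma: if `W` is an `𝒜 0`-module that embeds additively into `R`
compatibly with the action, with image contained in `⨆ n, ⨆ _ : P n, 𝒜 n` and containing each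
`𝒜 n` with `P n`, and `R` is strongly graded, then `W` is projective over `𝒜 0`. -/
theorem projective_of_graded (h : IsStronglyGraded 𝒜)
    (W : Type*) [AddCommGroup W] [Module (𝒜 0) W]
    (j : W →+ R) (hinj : Function.Injective j)
    (hsmul : ∀ (c : 𝒜 0) (w : W), j (c • w) = (c : R) * j w)
    (P : ℤ → Prop) [DecidablePred P]
    (hsub : ∀ n, P n → ∀ x ∈ 𝒜 n, ∃ w : W, j w = x)
    (hsup : ∀ w : W, j w ∈ ⨆ n, ⨆ _ : P n, 𝒜 n) :
    Module.Projective (𝒜 0) W := by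
  classical
  choose l hl hl1 using exists_dualbasis_list 𝒜 h
  choose g hg using hsub
  have mem0 : ∀ {n : ℤ} (a : 𝒜 n) (p : R × R), p ∈ l n → (a : R) * p.1 ∈ 𝒜 0 := by
    intro n a p hp
    have := SetLike.mul_mem_graded a.2 (hl n p hp).1
    simpa using this
  -- the additive map `𝒜 n →+ 𝒜 0`, `a ↦ a * y` for `y` the first component of `p`
  let μ : ∀ (n : ℤ) (p : { p : R × R // p ∈ l n }), (𝒜 n) →+ (𝒜 0) := fun n p =>
    { toFun := fun a => ⟨(a : R) * p.1.1, mem0 a p.1 p.2⟩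
      map_zero' := by ext; simp
      map_add' := by intro a b; ext; simp [add_mul] }
  -- the "dual basis" additive map `𝒜 n →+ (W →₀ 𝒜 0)` in each degree
  let φ : ∀ n : ℤ, (𝒜 n) →+ (W →₀ (𝒜 0)) := fun n =>
    if hn : P n then
      ((l n).attach.map fun p =>
        (Finsupp.singleAddHom (g n hn p.1.2 (hl n p.1 p.2).2)).comp (μ n p)).sum
    else 0
  have φ_apply : ∀ (n : ℤ) (hn : P n) (a : 𝒜 n),
      φ n a = ((l n).attach.map fun p =>
        Finsupp.single (g n hn p.1.2 (hl n p.1 p.2).2)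
          (⟨(a : R) * p.1.1, mem0 a p.1 p.2⟩ : 𝒜 0)).sum := by
    intro n hn a
    simp only [φ, dif_pos hn]
    rw [list_sum_addHom_apply]
    rfl
  -- the candidate section, as an additive map on `R`
  let S : R →+ (W →₀ (𝒜 0)) :=
    (DirectSum.toAddMonoid φ).comp (DirectSum.decomposeAddEquiv 𝒜).toAddMonoidHom
  have S_of_mem : ∀ {i : ℤ} {x : R} (hx : x ∈ 𝒜 i), S x = φ i ⟨x, hx⟩ := by
    intro i x hx
    show DirectSum.toAddMonoid φ (DirectSum.decompose 𝒜 x) = _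
    rw [DirectSum.decompose_of_mem 𝒜 hx, DirectSum.toAddMonoid_of]
  -- `S` is `𝒜 0`-semilinear
  have Sσ : ∀ (c : 𝒜 0) (r : R), S ((c : R) * r) = c • S r := by
    intro c
    refine DirectSum.Decomposition.inductionOn 𝒜 ?_ ?_ ?_
    · simp
    · rintro i ⟨m, hm⟩
      have hcm : (c : R) * m ∈ 𝒜 i := by simpa using SetLike.mul_mem_graded c.2 hm
      rw [S_of_mem hcm, S_of_mem hm]
      by_cases hi : P i
      · rw [φ_apply i hi, φ_apply i hi, list_smul_sum' (A := ↥(𝒜 0)) (M := W →₀ ↥(𝒜 0))]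
        apply congrArg List.sum
        apply List.map_congr_left
        intro p hp
        rw [Finsupp.smul_single]
        congr 1
        exact Subtype.ext (mul_assoc (c : R) m p.1.1)
      · simp only [φ, dif_neg hi, AddMonoidHom.zero_apply, smul_zero]
    · intro x y hx hy
      rw [mul_add, map_add, map_add, hx, hy]
      exact (smul_add c (S x) (S y)).symm
  -- `S` is a right inverse of `linearCombination` after applying `j`
  have tot : ∀ r : R, r ∈ (⨆ n, ⨆ _ : P n, 𝒜 n : Submodule ℤ R) →
      j (Finsupp.linearCombination (𝒜 0) (id : W → W) (S r)) = r := by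
    intro r hr
    refine Submodule.iSup_induction (fun n => ⨆ _ : P n, 𝒜 n)
      (motive := fun x => j ((Finsupp.linearCombination (𝒜 0) (id : W → W)) (S x)) = x) hr ?_ ?_ ?_
    · intro n x hx
      by_cases hn : P n
      · simp only [iSup_pos hn] at hx
        rw [S_of_mem hx, φ_apply n hn]
        rw [map_list_sum, List.map_map, map_list_sum, List.map_map]
        have : ∀ p ∈ (l n).attach,
            (j ∘ (Finsupp.linearCombination (𝒜 0) (id : W → W)) ∘ fun p =>
              Finsupp.single (g n hn p.1.2 (hl n p.1 p.2).2)
                (⟨x * p.1.1, mem0 ⟨x, hx⟩ p.1 p.2⟩ : 𝒜 0)) p = x * (p.1.1 * p.1.2) := by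
          intro p hp
          simp only [Function.comp_apply, Finsupp.linearCombination_single, id_eq]
          rw [hsmul, hg n hn p.1.2 (hl n p.1 p.2).2]
          exact mul_assoc x p.1.1 p.1.2
        rw [List.map_congr_left this]
        have : ((l n).attach.map fun p => x * (p.1.1 * p.1.2)).sum
            = ((l n).map fun p => x * (p.1 * p.2)).sum :=
          congrArg List.sum (List.attach_map_val (l := l n) (f := fun p => x * (p.1 * p.2)))
        rw [this, list_sum_map_mul_left', hl1 n, mul_one]
      · simp only [iSup_neg hn] at hx
        simp only [Submodule.mem_bot] at hx
        simp [hx]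
    · simp
    · intro x y hx hy
      rw [map_add, map_add, map_add, hx, hy]
  -- assemble the linear section
  refine Module.projective_def.2 ⟨⟨⟨fun w => S (j w), by intro a b; simp⟩, ?_⟩, ?_⟩
  · intro c w
    simp only [AddHom.coe_mk, RingHom.id_apply]
    rw [hsmul, Sσ]
  · intro w
    apply hinj
    exact tot (j w) (hsup w)

/-- Transfer of a `B`-linear map to an `A`-linear map along a ring morphism `f : A →+* B`,
when the `A`-actions are induced by `f`. -/
def restrictLinearMap {A B : Type*} [Ring A] [Ring B] (f : A →+* B)
    {M N : Type*} [AddCommGroup M] [AddCommGroup N]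
    [Module B M] [Module B N] [Module A M] [Module A N]
    (hM : ∀ (a : A) (m : M), a • m = f a • m) (hN : ∀ (a : A) (n : N), a • n = f a • n)
    (g : M →ₗ[B] N) : M →ₗ[A] N :=
  { toFun := g, map_add' := g.map_add,
    map_smul' := fun a m => by simp only [RingHom.id_apply, hM, hN, g.map_smul] }

/-- Transitivity of projectivity along restriction of scalars. -/
theorem projective_trans {A B : Type*} [Ring A] [Ring B] (f : A →+* B)
    (M : Type*) [AddCommGroup M] [Module B M] [Module A M] [Module A B]
    (hsM : ∀ (a : A) (m : M), a • m = f a • m)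
    (hsB : ∀ (a : A) (b : B), a • b = f a * b)
    (hB : Module.Projective A B) (hM : Module.Projective B M) :
    Module.Projective A M := by
  classical
  obtain ⟨s, hs⟩ := Module.projective_def.1 hM
  have hsF : ∀ (a : A) (v : M →₀ B), a • v = f a • v := by
    intro a v; ext x; simp [hsB, Finsupp.smul_apply, smul_eq_mul]
  haveI : Module.Projective A (Π₀ _ : M, B) := inferInstance
  haveI : Module.Projective A (M →₀ B) :=
    Module.Projective.of_equiv (finsuppLequivDFinsupp (R := A) (M := B) (ι := M)).symm
  refine Module.Projective.of_split
    (restrictLinearMap f hsM hsF s)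
    (restrictLinearMap f hsF hsM (Finsupp.linearCombination B id)) ?_
  ext m
  exact hs m

end AuxiliaryLemmas

set_option synthInstance.maxHeartbeats 1000000 in
/-- Let `Y⁻`, `Y⁰`, `Y⁺` be projective modules over `R_{≤0}`, `R` and `R_{≥0}`
respectively, and let `υ⁻ : Y⁻ → Y⁰` be `R_{≤0}`-linear and `υ⁺ : Y⁺ → Y⁰` be
`R_{≥0}`-linear.  If the `𝒜 0`-linear map `Y⁻ × Y⁺ → Y⁰`, `(a, b) ↦ υ⁻ a - υ⁺ b`,
is surjective, then its kernel is a projective `𝒜 0`-module. -/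
theorem ker_difference_projective (h : IsStronglyGraded 𝒜)
    (Yneg Yzero Ypos : Type u) [AddCommGroup Yneg] [AddCommGroup Yzero] [AddCommGroup Ypos]
    [Module (RleSubring 𝒜) Yneg] [Module R Yzero] [Module (RgeSubring 𝒜) Ypos]
    (hYm : Module.Projective (RleSubring 𝒜) Yneg)
    (hY0 : Module.Projective R Yzero)
    (hYp : Module.Projective (RgeSubring 𝒜) Ypos)
    (υneg : Yneg →ₗ[RleSubring 𝒜] Yzero) (υpos : Ypos →ₗ[RgeSubring 𝒜] Yzero)
    (F : (Yneg × Ypos) →ₗ[𝒜 0] Yzero)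
    (hF : ∀ (a : Yneg) (b : Ypos), F (a, b) = υneg a - υpos b)
    (hsurj : Function.Surjective F) :
    Module.Projective (𝒜 0) ↥(LinearMap.ker F) := by
  classical
  -- `R`, `R_{≤0}`, `R_{≥0}` are projective `𝒜 0`-modules
  have hsupR : (⨆ n, ⨆ _ : True, 𝒜 n : Submodule ℤ R) = ⊤ := by
    simp only [iSup_pos trivial]
    exact (DirectSum.Decomposition.isInternal 𝒜).submodule_iSup_eq_top
  have hRproj : Module.Projective (𝒜 0) R :=
    projective_of_graded 𝒜 h R (AddMonoidHom.id R) (fun _ _ h => h)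
      (fun c r => rfl) (fun _ => True) (fun n _ x _ => ⟨x, rfl⟩)
      (fun r => by rw [hsupR]; trivial)
  have hRleproj : Module.Projective (𝒜 0) (RleSubring 𝒜) :=
    projective_of_graded 𝒜 h (RleSubring 𝒜) (RleSubring 𝒜).subtype.toAddMonoidHom
      Subtype.coe_injective (fun c w => rfl) (fun n => n ≤ 0)
      (fun n hn x hx =>
        ⟨⟨x, Submodule.mem_iSup_of_mem n (Submodule.mem_iSup_of_mem hn hx)⟩, rfl⟩)
      (fun w => w.2)
  have hRgeproj : Module.Projective (𝒜 0) (RgeSubring 𝒜) :=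
    projective_of_graded 𝒜 h (RgeSubring 𝒜) (RgeSubring 𝒜).subtype.toAddMonoidHom
      Subtype.coe_injective (fun c w => rfl) (fun n => 0 ≤ n)
      (fun n hn x hx =>
        ⟨⟨x, Submodule.mem_iSup_of_mem n (Submodule.mem_iSup_of_mem hn hx)⟩, rfl⟩)
      (fun w => w.2)
  -- transfer projectivity to the three modules
  haveI hY0' : Module.Projective (𝒜 0) Yzero :=
    projective_trans (incl0 𝒜) Yzero (fun a m => rfl) (fun a b => rfl) hRproj hY0
  haveI hYm' : Module.Projective (𝒜 0) Yneg :=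
    projective_trans (incl0le 𝒜) Yneg (fun a m => rfl) (fun a b => rfl) hRleproj hYm
  haveI hYp' : Module.Projective (𝒜 0) Ypos :=
    projective_trans (incl0ge 𝒜) Ypos (fun a m => rfl) (fun a b => rfl) hRgeproj hYp
  haveI : Module.Projective (𝒜 0) (Yneg × Ypos) := inferInstance
  -- split the surjection `F`
  obtain ⟨σ, hσ⟩ := Module.projective_lifting_property F LinearMap.id hsurj
  have hσ' : ∀ y, F (σ y) = y := fun y => LinearMap.congr_fun hσ y
  have hmem : ∀ x : Yneg × Ypos,
      ((LinearMap.id - σ ∘ₗ F : (Yneg × Ypos) →ₗ[𝒜 0] Yneg × Ypos)) x ∈ LinearMap.ker F := by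
    intro x
    simp [LinearMap.mem_ker, hσ']
  refine Module.Projective.of_split (M := Yneg × Ypos) (LinearMap.ker F).subtype
    ((LinearMap.id - σ ∘ₗ F).codRestrict (LinearMap.ker F) hmem) ?_
  apply LinearMap.ext
  intro x
  have hx : F (x : Yneg × Ypos) = 0 := x.2
  apply Subtype.ext
  show (x : Yneg × Ypos) - σ (F (x : Yneg × Ypos)) = (x : Yneg × Ypos)
  rw [hx, map_zero, sub_zero]
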